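/- Fix integers t ≥ 2 and K ≥ 1, and reals Δ > 0 and τ² ≥ 0. Let ν : {1, …, K} → ℝ satisfy |ν(r') − ν(r)| ≥ Δ for all r ≠ r'. On a probability space, let (c_j)_{j=1}^{t−1} be i.i.d. random variables uniformly distributed on {1, …, K}, and let (g_j)_{j=1}^{t−1} be i.i.d. real Gaussian random variables with mean 0 and variance τ², with the family (g_j) independent of the family (c_j). Define logits s_j := ν(c_j) + g_j for j = 1, …, t−1, and attention weights α_j := e^{s_j} / Σ_{ℓ=1}^{t−1} e^{s_ℓ}. Suppose there exist η ∈ (0, 1), B ≤ 2, and κ' > 0 such that for every j with 1 ≤ j ≤ t−2, writing S_j := s_{j+1} − s_j, m_j := α_j + α_{j+1}, and E_j := {m_j ≥ η} ∩ {|S_j| ≤ B}, one has E[S_j² · 1_{E_j}] ≥ κ' · E[S_j²]. Then the expected attention roughness R_t := Σ_{j=1}^{t−2} (α_{j+1} − α_j)² satisfies E[R_t] ≥ (η² κ' / 16) · (t − 2) · (1 − 1/K) · Δ². -/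

import Mathlib

open MeasureTheory ProbabilityTheory NNReal

lemma exp_gap_lower {x : ℝ} (h0 : 0 ≤ x) (h2 : x ≤ 2) :
    x / 4 * (Real.exp x + 1) ≤ Real.exp x - 1 := by
  have h1 : 1 + x / 2 ≤ Real.exp (x / 2) := by linarith [Real.add_one_le_exp (x / 2)]
  have he : Real.exp x = Real.exp (x / 2) ^ 2 := by
    rw [show x = x / 2 + x / 2 by ring, Real.exp_add]; ring
  have hp : (0:ℝ) < Real.exp (x / 2) := Real.exp_pos _
  have hu2 : (1 + x / 2) ^ 2 ≤ Real.exp (x / 2) ^ 2 := by nlinarith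
  have hq : (0:ℝ) ≤ 1 - x / 4 := by linarith
  have := mul_le_mul_of_nonneg_right hu2 hq
  nlinarith [mul_nonneg (mul_nonneg h0 h0) h0, mul_nonneg h0 (sq_nonneg x)]

lemma exp_gap_abs {x : ℝ} (hx : |x| ≤ 2) :
    |x| / 4 * (Real.exp x + 1) ≤ |Real.exp x - 1| := by
  rcases le_or_gt 0 x with h0 | h0
  · rw [abs_of_nonneg h0, abs_of_nonneg
      (by linarith [Real.add_one_le_exp x] : (0:ℝ) ≤ Real.exp x - 1)]
    exact exp_gap_lower h0 (by rwa [abs_of_nonneg h0] at hx)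
  · have h0' : 0 ≤ -x := by linarith
    have h2' : -x ≤ 2 := by rwa [abs_of_neg h0] at hx
    have key := exp_gap_lower h0' h2'
    have hpos : (0:ℝ) < Real.exp x := Real.exp_pos x
    have hne : Real.exp x ≠ 0 := ne_of_gt hpos
    rw [Real.exp_neg x] at key
    have hexp1 : Real.exp x ≤ 1 := by
      rw [← Real.exp_zero]; exact Real.exp_le_exp.mpr h0.le
    rw [abs_of_neg h0, abs_of_nonpos (by linarith : Real.exp x - 1 ≤ 0)]
    have hmul := mul_le_mul_of_nonneg_left key hpos.le
    have hcancel : Real.exp x * (Real.exp x)⁻¹ = 1 := mul_inv_cancel₀ hne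
    nlinarith [hmul, hcancel]

lemma softmax_sq_lower {a b Z η : ℝ} (hZ : 0 < Z) (hη0 : 0 ≤ η)
    (hsum : η ≤ Real.exp a / Z + Real.exp b / Z) (hab : |b - a| ≤ 2) :
    η ^ 2 / 16 * (b - a) ^ 2 ≤ (Real.exp b / Z - Real.exp a / Z) ^ 2 := by
  have ha : (0:ℝ) < Real.exp a := Real.exp_pos a
  have h1 := exp_gap_abs hab
  have hba : Real.exp a * Real.exp (b - a) = Real.exp b := by
    rw [← Real.exp_add]; ring_nf
  have h2 : |b - a| / 4 * (Real.exp b + Real.exp a) ≤ |Real.exp b - Real.exp a| := by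
    have := mul_le_mul_of_nonneg_left h1 ha.le
    calc |b - a| / 4 * (Real.exp b + Real.exp a)
        = Real.exp a * (|b - a| / 4 * (Real.exp (b - a) + 1)) := by
          rw [← hba]; ring
      _ ≤ Real.exp a * |Real.exp (b - a) - 1| := this
      _ = |Real.exp a * (Real.exp (b - a) - 1)| := by
          rw [abs_mul, abs_of_pos ha]
      _ = |Real.exp b - Real.exp a| := by rw [mul_sub, hba, mul_one]
  have h3 : |b - a| / 4 * (Real.exp a / Z + Real.exp b / Z)
      ≤ |Real.exp b / Z - Real.exp a / Z| := by
    rw [div_sub_div_same, abs_div, abs_of_pos hZ]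
    rw [← add_div]
    rw [show |b - a| / 4 * ((Real.exp a + Real.exp b) / Z)
        = (|b - a| / 4 * (Real.exp b + Real.exp a)) / Z by ring]
    exact div_le_div_of_nonneg_right h2 hZ.le |>.trans_eq rfl
  have h4 : η * (|b - a| / 4) ≤ |Real.exp b / Z - Real.exp a / Z| := by
    calc η * (|b - a| / 4) ≤ (Real.exp a / Z + Real.exp b / Z) * (|b - a| / 4) :=
          mul_le_mul_of_nonneg_right hsum (by positivity)
      _ = |b - a| / 4 * (Real.exp a / Z + Real.exp b / Z) := by ring
      _ ≤ _ := h3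
  have h5 : (η * (|b - a| / 4)) ^ 2 ≤ |Real.exp b / Z - Real.exp a / Z| ^ 2 := by
    apply pow_le_pow_left₀ (by positivity) h4
  calc η ^ 2 / 16 * (b - a) ^ 2 = (η * (|b - a| / 4)) ^ 2 := by
        rw [mul_pow, show (|b - a| / 4) ^ 2 = |b - a| ^ 2 / 16 by ring, sq_abs]
        ring
    _ ≤ |Real.exp b / Z - Real.exp a / Z| ^ 2 := h5
    _ = (Real.exp b / Z - Real.exp a / Z) ^ 2 := sq_abs _

lemma sq_integrable_gaussian (v : ℝ≥0) :
    Integrable (fun x : ℝ => x ^ 2) (gaussianReal 0 v) := by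
  by_cases hv : v = 0
  · rw [hv, gaussianReal_zero_var]
    exact (integrable_const ((0:ℝ) ^ 2)).congr (ae_eq_dirac (fun x : ℝ => x ^ 2)).symm
  · rw [gaussianReal_of_var_ne_zero _ hv]
    rw [integrable_withDensity_iff (measurable_gaussianPDF _ _)
      (ae_of_all _ fun x => ENNReal.ofReal_lt_top)]
    have hb : (0:ℝ) < (2 * (v:ℝ))⁻¹ := by positivity
    have h := (integrable_rpow_mul_exp_neg_mul_sq hb (by norm_num : (-1:ℝ) < 2)).const_mul
      ((Real.sqrt (2 * Real.pi * v))⁻¹)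
    refine h.congr (ae_of_all _ fun x => ?_)
    simp only [gaussianPDF_def, gaussianPDFReal_def]
    rw [ENNReal.toReal_ofReal (by positivity)]
    have h2 : (x : ℝ) ^ (2:ℝ) = x ^ 2 := by
      rw [show ((2:ℝ)) = ((2:ℕ):ℝ) by norm_num, Real.rpow_natCast]
    rw [h2, show -(x - 0) ^ 2 / (2 * (v:ℝ)) = -(2 * (v:ℝ))⁻¹ * x ^ 2 by ring]
    ring

/-- The index `j` of an adjacent pair, viewed in `Fin (t - 1)`. -/
def pairLeft {t : ℕ} (j : Fin (t - 2)) : Fin (t - 1) :=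
  ⟨j.val, by have := j.isLt; omega⟩

/-- The index `j + 1` of an adjacent pair, viewed in `Fin (t - 1)`. -/
def pairRight {t : ℕ} (j : Fin (t - 2)) : Fin (t - 1) :=
  ⟨j.val + 1, by have := j.isLt; omega⟩

/-- Main theorem (projected formulation): a monotone increasing-in-`K` lower bound on the
expected attention roughness `E[R_t] = E[∑_{j=1}^{t-2} (α_{j+1} - α_j)²]` for softmax
attention over logits `s_j = ν(c_j) + g_j`, where the topic labels `c_j` are i.i.d. uniform
on `{1, …, K}`, the noises `g_j` are i.i.d. centered Gaussians with variance `τ²`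
independent of the labels, `ν` has `Δ`-separated values, and the softmax non-degeneracy
condition holds for each adjacent pair:
`E[R_t] ≥ (η² κ' / 16) · (t - 2) · (1 - 1/K) · Δ²`. -/
theorem attention_roughness_lower_bound {Ω : Type*} [MeasurableSpace Ω] (μ : Measure Ω)
    [IsProbabilityMeasure μ] (t K : ℕ) (ht : 2 ≤ t) (hK : 1 ≤ K)
    (Δ : ℝ) (hΔ : 0 < Δ) (τsq : ℝ≥0)
    (ν : Fin K → ℝ) (hsep : ∀ r r' : Fin K, r ≠ r' → Δ ≤ |ν r' - ν r|)
    (c : Fin (t - 1) → Ω → Fin K) (g : Fin (t - 1) → Ω → ℝ)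
    (hc_meas : ∀ j, Measurable (c j)) (hg_meas : ∀ j, Measurable (g j))
    (hc_indep : iIndepFun c μ)
    (hc_unif : ∀ j (r : Fin K), μ (c j ⁻¹' {r}) = 1 / K)
    (hg_indep : iIndepFun g μ)
    (hg_gauss : ∀ j, μ.map (g j) = gaussianReal 0 τsq)
    (hcg_indep : IndepFun (fun ω j => c j ω) (fun ω j => g j ω) μ)
    (s : Fin (t - 1) → Ω → ℝ) (hs : ∀ j ω, s j ω = ν (c j ω) + g j ω)
    (α : Fin (t - 1) → Ω → ℝ)
    (hα : ∀ j ω, α j ω = Real.exp (s j ω) / ∑ ℓ, Real.exp (s ℓ ω))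
    (η B κ' : ℝ) (hη : η ∈ Set.Ioo (0 : ℝ) 1) (hB : B ≤ 2) (hκ : 0 < κ')
    (hnd : ∀ j : Fin (t - 2),
      κ' * ∫ ω, (s (pairRight j) ω - s (pairLeft j) ω) ^ 2 ∂μ ≤
        ∫ ω in {ω | η ≤ α (pairLeft j) ω + α (pairRight j) ω} ∩
            {ω | |s (pairRight j) ω - s (pairLeft j) ω| ≤ B},
          (s (pairRight j) ω - s (pairLeft j) ω) ^ 2 ∂μ) :
    η ^ 2 * κ' / 16 * ((t - 2 : ℕ) * (1 - 1 / (K : ℝ)) * Δ ^ 2) ≤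
      ∫ ω, ∑ j : Fin (t - 2), (α (pairRight j) ω - α (pairLeft j) ω) ^ 2 ∂μ := by
  obtain ⟨hη0, hη1⟩ := hη
  have hKR : (0:ℝ) < K := by exact_mod_cast hK
  have htm1 : 0 < t - 1 := by omega
  haveI : NeZero (t - 1) := ⟨by omega⟩
  -- measurability
  have hν : Measurable ν := measurable_of_countable ν
  have hs_meas : ∀ j, Measurable (s j) := by
    intro j
    have : s j = fun ω => ν (c j ω) + g j ω := funext (hs j)
    rw [this]; exact (hν.comp (hc_meas j)).add (hg_meas j)
  have hα_meas : ∀ j, Measurable (α j) := by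
    intro j
    have : α j = fun ω => Real.exp (s j ω) / ∑ ℓ, Real.exp (s ℓ ω) := funext (hα j)
    rw [this]
    exact (Real.measurable_exp.comp (hs_meas j)).div
      (Finset.measurable_sum _ fun ℓ _ => Real.measurable_exp.comp (hs_meas ℓ))
  have hZpos : ∀ ω, (0:ℝ) < ∑ ℓ, Real.exp (s ℓ ω) := by
    intro ω
    exact Finset.sum_pos (fun ℓ _ => Real.exp_pos _) Finset.univ_nonempty
  have hα01 : ∀ k ω, 0 ≤ α k ω ∧ α k ω ≤ 1 := by
    intro k ω
    rw [hα k ω]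
    constructor
    · positivity
    · rw [div_le_one (hZpos ω)]
      exact Finset.single_le_sum (fun ℓ _ => (Real.exp_pos (s ℓ ω)).le) (Finset.mem_univ k)
  -- integrability of the squared attention differences
  have hαd_int : ∀ j : Fin (t - 2),
      Integrable (fun ω => (α (pairRight j) ω - α (pairLeft j) ω) ^ 2) μ := by
    intro j
    refine (integrable_const (1:ℝ)).mono'
      (((hα_meas _).sub (hα_meas _)).pow_const 2).aestronglyMeasurable
      (ae_of_all _ fun ω => ?_)
    have h1 := hα01 (pairRight j) ω
    have h2 := hα01 (pairLeft j) ω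
    rw [Real.norm_eq_abs, abs_of_nonneg (sq_nonneg _)]
    nlinarith [h1.1, h1.2, h2.1, h2.2]
  -- step 1 : per-pair integral bound via the non-degeneracy condition
  have step1 : ∀ j : Fin (t - 2),
      η ^ 2 * κ' / 16 * ∫ ω, (s (pairRight j) ω - s (pairLeft j) ω) ^ 2 ∂μ ≤
        ∫ ω, (α (pairRight j) ω - α (pairLeft j) ω) ^ 2 ∂μ := by
    intro j
    set L := pairLeft j
    set R := pairRight j
    set Sf : Ω → ℝ := fun ω => s R ω - s L ω with hSf
    have hSmeas : Measurable Sf := (hs_meas R).sub (hs_meas L)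
    set E : Set Ω := {ω | η ≤ α L ω + α R ω} ∩ {ω | |Sf ω| ≤ B} with hEdef
    have hE : MeasurableSet E :=
      (measurableSet_le measurable_const ((hα_meas L).add (hα_meas R))).inter
        (measurableSet_le hSmeas.abs measurable_const)
    have hpt : ∀ ω ∈ E, η ^ 2 / 16 * Sf ω ^ 2 ≤ (α R ω - α L ω) ^ 2 := by
      intro ω hω
      obtain ⟨hω1, hω2⟩ := hω
      have hab : |s R ω - s L ω| ≤ 2 := le_trans hω2 hB
      have hsum : η ≤ Real.exp (s L ω) / (∑ ℓ, Real.exp (s ℓ ω))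
          + Real.exp (s R ω) / (∑ ℓ, Real.exp (s ℓ ω)) := by
        rw [← hα L ω, ← hα R ω]; exact hω1
      have := softmax_sq_lower (hZpos ω) hη0.le hsum hab
      rw [← hα L ω, ← hα R ω] at this
      exact this
    have int1 : IntegrableOn (fun ω => η ^ 2 / 16 * Sf ω ^ 2) E μ := by
      refine (integrable_const (η ^ 2 / 16 * 4)).mono'
        ((hSmeas.pow_const 2).const_mul _).aestronglyMeasurable ?_
      refine (ae_restrict_iff' hE).2 (ae_of_all _ fun ω hω => ?_)
      obtain ⟨_, hω2⟩ := hω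
      have habs : |Sf ω| ≤ 2 := le_trans hω2 hB
      have : Sf ω ^ 2 ≤ 4 := by nlinarith [sq_abs (Sf ω), abs_nonneg (Sf ω)]
      rw [Real.norm_eq_abs, abs_of_nonneg (by positivity)]
      have : η ^ 2 / 16 * Sf ω ^ 2 ≤ η ^ 2 / 16 * 4 :=
        mul_le_mul_of_nonneg_left this (by positivity)
      simpa using this
    calc η ^ 2 * κ' / 16 * ∫ ω, Sf ω ^ 2 ∂μ
        = η ^ 2 / 16 * (κ' * ∫ ω, Sf ω ^ 2 ∂μ) := by ring
      _ ≤ η ^ 2 / 16 * ∫ ω in E, Sf ω ^ 2 ∂μ :=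
          mul_le_mul_of_nonneg_left (hnd j) (by positivity)
      _ = ∫ ω in E, η ^ 2 / 16 * Sf ω ^ 2 ∂μ := (integral_const_mul _ _).symm
      _ ≤ ∫ ω in E, (α R ω - α L ω) ^ 2 ∂μ :=
          setIntegral_mono_on int1 ((hαd_int j).integrableOn) hE hpt
      _ ≤ ∫ ω, (α R ω - α L ω) ^ 2 ∂μ :=
          setIntegral_le_integral (hαd_int j) (ae_of_all _ fun ω => sq_nonneg _)
  -- gaussian integrability
  have hgsq : ∀ k, Integrable (fun ω => g k ω ^ 2) μ := by
    intro k
    have h := sq_integrable_gaussian τsq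
    rw [← hg_gauss k] at h
    exact (integrable_map_measure
      (measurable_id.pow_const 2).aestronglyMeasurable (hg_meas k).aemeasurable).mp h
  have hgi : ∀ k, Integrable (g k) μ := by
    intro k
    have hb : Integrable (fun ω => 1 + g k ω ^ 2) μ := (integrable_const 1).add (hgsq k)
    refine hb.mono' (hg_meas k).aestronglyMeasurable (ae_of_all _ fun ω => ?_)
    rw [Real.norm_eq_abs]
    nlinarith [sq_abs (g k ω), sq_nonneg (|g k ω| - 1), abs_nonneg (g k ω)]
  have hgint_eq : ∀ k, ∫ ω, g k ω ∂μ = ∫ x, x ∂(gaussianReal 0 τsq) := by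
    intro k
    have h := integral_map (μ := μ) (φ := g k) (f := fun x => x) (hg_meas k).aemeasurable
      aestronglyMeasurable_id
    rw [hg_gauss k] at h
    exact h.symm
  -- step 2 : lower bound on the logit-difference second moment
  have step2 : ∀ j : Fin (t - 2),
      (1 - 1 / (K : ℝ)) * Δ ^ 2 ≤
        ∫ ω, (s (pairRight j) ω - s (pairLeft j) ω) ^ 2 ∂μ := by
    intro j
    set L := pairLeft j
    set R := pairRight j
    have hLR : L ≠ R := by
      simp only [L, R, pairLeft, pairRight, Fin.mk.injEq, ne_eq]
      omega
    set D : Ω → ℝ := fun ω => ν (c R ω) - ν (c L ω) with hD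
    set G : Ω → ℝ := fun ω => g R ω - g L ω with hG
    have hSDG : ∀ ω, s R ω - s L ω = D ω + G ω := by
      intro ω; rw [hs R ω, hs L ω]; simp only [D, G]; ring
    have hDmeas : Measurable D := (hν.comp (hc_meas R)).sub (hν.comp (hc_meas L))
    have hGmeas : Measurable G := (hg_meas R).sub (hg_meas L)
    set M : ℝ := ∑ r, |ν r| with hM
    have hDbd : ∀ ω, |D ω| ≤ 2 * M := by
      intro ω
      have h1 : |ν (c R ω)| ≤ M :=
        Finset.single_le_sum (fun r _ => abs_nonneg (ν r)) (Finset.mem_univ _)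
      have h2 : |ν (c L ω)| ≤ M :=
        Finset.single_le_sum (fun r _ => abs_nonneg (ν r)) (Finset.mem_univ _)
      calc |D ω| ≤ |ν (c R ω)| + |ν (c L ω)| := abs_sub _ _
        _ ≤ 2 * M := by linarith
    have hM0 : 0 ≤ M := Finset.sum_nonneg fun r _ => abs_nonneg (ν r)
    have hGint : Integrable G μ := (hgi R).sub (hgi L)
    have hG2int : Integrable (fun ω => G ω ^ 2) μ := by
      have hb : Integrable (fun ω => 2 * (g R ω ^ 2 + g L ω ^ 2)) μ :=
        ((hgsq R).add (hgsq L)).const_mul 2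
      refine hb.mono' (hGmeas.pow_const 2).aestronglyMeasurable (ae_of_all _ fun ω => ?_)
      rw [Real.norm_eq_abs, abs_of_nonneg (sq_nonneg _)]
      simp only [G]
      nlinarith [sq_nonneg (g R ω + g L ω)]
    have hD2int : Integrable (fun ω => D ω ^ 2) μ := by
      refine (integrable_const ((2*M) ^ 2)).mono'
        (hDmeas.pow_const 2).aestronglyMeasurable (ae_of_all _ fun ω => ?_)
      rw [Real.norm_eq_abs, abs_of_nonneg (sq_nonneg _)]
      nlinarith [hDbd ω, abs_nonneg (D ω), sq_abs (D ω)]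
    have hDGint : Integrable (fun ω => D ω * G ω) μ := by
      refine ((hGint.norm).const_mul (2*M)).mono'
        (hDmeas.mul hGmeas).aestronglyMeasurable (ae_of_all _ fun ω => ?_)
      rw [Real.norm_eq_abs, abs_mul, Real.norm_eq_abs]
      exact mul_le_mul_of_nonneg_right (hDbd ω) (abs_nonneg _)
    -- independence of D and G
    have hindDG : IndepFun D G μ := by
      have hφ : Measurable (fun v : Fin (t-1) → Fin K => ν (v R) - ν (v L)) :=
        (hν.comp (measurable_pi_apply R)).sub (hν.comp (measurable_pi_apply L))
      have hψ : Measurable (fun w : Fin (t-1) → ℝ => w R - w L) :=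
        (measurable_pi_apply R).sub (measurable_pi_apply L)
      exact hcg_indep.comp hφ hψ
    have hDGzero : ∫ ω, D ω * G ω ∂μ = 0 := by
      have hmul := hindDG.integral_mul_eq_mul_integral hDmeas.aestronglyMeasurable
        hGmeas.aestronglyMeasurable
      have hGzero : ∫ ω, G ω ∂μ = 0 := by
        have := integral_sub (hgi R) (hgi L)
        simp only [G]
        rw [this, hgint_eq R, hgint_eq L, sub_self]
      calc ∫ ω, D ω * G ω ∂μ = ∫ ω, (D * G) ω ∂μ := rfl
        _ = (∫ ω, D ω ∂μ) * ∫ ω, G ω ∂μ := hmul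
        _ = 0 := by rw [hGzero, mul_zero]
    -- second moment expansion
    have hexp : ∫ ω, (s R ω - s L ω) ^ 2 ∂μ
        = (∫ ω, D ω ^ 2 ∂μ) + ∫ ω, G ω ^ 2 ∂μ := by
      have heq : (fun ω => (s R ω - s L ω) ^ 2)
          = fun ω => D ω ^ 2 + (2 * (D ω * G ω) + G ω ^ 2) := by
        funext ω; rw [hSDG ω]; ring
      have hsum23 : Integrable (fun ω => 2 * (D ω * G ω) + G ω ^ 2) μ :=
        (hDGint.const_mul 2).add hG2int
      rw [heq, integral_add hD2int hsum23,
        integral_add (hDGint.const_mul 2) hG2int, integral_const_mul, hDGzero]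
      ring
    -- lower bound ∫ D² via the separation and uniformity
    set A : Set Ω := {ω | c L ω ≠ c R ω} with hA
    have hAeqc : {ω | c L ω = c R ω} = ⋃ r : Fin K, (c L ⁻¹' {r} ∩ c R ⁻¹' {r}) := by
      ext ω
      simp only [Set.mem_setOf_eq, Set.mem_iUnion, Set.mem_inter_iff, Set.mem_preimage,
        Set.mem_singleton_iff]
      constructor
      · intro h; exact ⟨c R ω, h, rfl⟩
      · rintro ⟨r, h1, h2⟩; rw [h1, h2]
    have hAc_meas : MeasurableSet {ω | c L ω = c R ω} := by
      rw [hAeqc]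
      exact MeasurableSet.iUnion fun r =>
        ((hc_meas L (MeasurableSet.singleton r)).inter (hc_meas R (MeasurableSet.singleton r)))
    have hAmeas : MeasurableSet A := hAc_meas.compl
    have hmeasAc : μ {ω | c L ω = c R ω} = 1 / K := by
      rw [hAeqc]
      have hdisj : Pairwise (Function.onFun Disjoint
          fun r : Fin K => c L ⁻¹' {r} ∩ c R ⁻¹' {r}) := by
        intro r r' hrr'
        refine Set.disjoint_left.mpr fun ω hω hω' => ?_
        exact hrr' (hω.1.symm.trans hω'.1)
      rw [measure_iUnion hdisj fun r =>
        ((hc_meas L (MeasurableSet.singleton r)).inter (hc_meas R (MeasurableSet.singleton r)))]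
      have hterm : ∀ r : Fin K, μ (c L ⁻¹' {r} ∩ c R ⁻¹' {r})
          = 1 / (K:ENNReal) * (1 / (K:ENNReal)) := by
        intro r
        rw [(hc_indep.indepFun hLR).measure_inter_preimage_eq_mul {r} {r}
          (MeasurableSet.singleton r) (MeasurableSet.singleton r),
          hc_unif L r, hc_unif R r]
      have hKne : (K:ENNReal) ≠ 0 := by
        simp only [ne_eq, Nat.cast_eq_zero]; omega
      have hKnetop : (K:ENNReal) ≠ ⊤ := ENNReal.natCast_ne_top K
      calc ∑' r : Fin K, μ (c L ⁻¹' {r} ∩ c R ⁻¹' {r})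
          = ∑' _r : Fin K, (1 / (K:ENNReal) * (1 / (K:ENNReal))) := tsum_congr hterm
        _ = (K:ENNReal) * (1 / (K:ENNReal) * (1 / (K:ENNReal))) := by
            rw [tsum_fintype]
            simp [Finset.sum_const, Finset.card_univ, Fintype.card_fin, nsmul_eq_mul]
        _ = 1 / (K:ENNReal) := by
            rw [one_div, ← mul_assoc, ENNReal.mul_inv_cancel hKne hKnetop, one_mul]
    have hmeasA : μ A = 1 - 1 / K := by
      have : A = {ω | c L ω = c R ω}ᶜ := rfl
      rw [this, measure_compl hAc_meas (measure_ne_top μ _), hmeasAc, measure_univ]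
    have hAreal : (μ A).toReal = 1 - 1 / (K:ℝ) := by
      rw [hmeasA]
      have h1K : (1:ENNReal) / K ≤ 1 := by
        rw [one_div]
        exact ENNReal.inv_le_one.mpr (by exact_mod_cast hK)
      rw [ENNReal.toReal_sub_of_le h1K ENNReal.one_ne_top]
      simp [ENNReal.toReal_inv]
    have hDlow : (1 - 1 / (K:ℝ)) * Δ ^ 2 ≤ ∫ ω, D ω ^ 2 ∂μ := by
      have h1 : ∫ ω in A, (Δ:ℝ) ^ 2 ∂μ ≤ ∫ ω in A, D ω ^ 2 ∂μ := by
        refine setIntegral_mono_on (integrableOn_const (measure_lt_top μ A).ne)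
          hD2int.integrableOn hAmeas fun ω hω => ?_
        have hsep' := hsep (c L ω) (c R ω) hω
        have : Δ ^ 2 ≤ |ν (c R ω) - ν (c L ω)| ^ 2 :=
          pow_le_pow_left₀ hΔ.le hsep' 2
        rwa [sq_abs] at this
      have h2 : ∫ ω in A, D ω ^ 2 ∂μ ≤ ∫ ω, D ω ^ 2 ∂μ :=
        setIntegral_le_integral hD2int (ae_of_all _ fun ω => sq_nonneg _)
      have h3 : ∫ ω in A, (Δ:ℝ) ^ 2 ∂μ = (μ A).toReal * Δ ^ 2 := by
        rw [setIntegral_const, smul_eq_mul, measureReal_def]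
      rw [h3, hAreal] at h1
      linarith
    have hG2nonneg : 0 ≤ ∫ ω, G ω ^ 2 ∂μ := integral_nonneg fun ω => sq_nonneg _
    rw [hexp]
    linarith
  -- assemble
  have hsum_int : ∫ ω, ∑ j : Fin (t - 2), (α (pairRight j) ω - α (pairLeft j) ω) ^ 2 ∂μ
      = ∑ j : Fin (t - 2), ∫ ω, (α (pairRight j) ω - α (pairLeft j) ω) ^ 2 ∂μ :=
    integral_finset_sum _ fun j _ => hαd_int j
  rw [hsum_int]
  have hper : ∀ j : Fin (t - 2),
      η ^ 2 * κ' / 16 * ((1 - 1 / (K : ℝ)) * Δ ^ 2) ≤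
        ∫ ω, (α (pairRight j) ω - α (pairLeft j) ω) ^ 2 ∂μ := by
    intro j
    refine le_trans ?_ (step1 j)
    exact mul_le_mul_of_nonneg_left (step2 j) (by positivity)
  calc η ^ 2 * κ' / 16 * ((t - 2 : ℕ) * (1 - 1 / (K : ℝ)) * Δ ^ 2)
      = ∑ _x : Fin (t - 2), η ^ 2 * κ' / 16 * ((1 - 1 / (K : ℝ)) * Δ ^ 2) := by
        rw [Finset.sum_const, Finset.card_univ, Fintype.card_fin, nsmul_eq_mul]
        ring
    _ ≤ ∑ j : Fin (t - 2), ∫ ω, (α (pairRight j) ω - α (pairLeft j) ω) ^ 2 ∂μ :=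
        Finset.sum_le_sum fun j _ => hper j
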